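/- Position-based decoding: Let α, β be finite types, ε ∈ (0,1), ρ a density matrix on α × β with marginals ρ^A = Tr_β ρ and ρ^B = Tr_α ρ, and σ a density matrix on β with the support of ρ^B contained in the support of σ. Suppose Π is a matrix on α × β with 0 ≼ Π ≼ 1 and Tr(Π ρ) ≥ 1 − ε, and let k ∈ ℝ satisfy Tr(Π (ρ^A ⊗ σ)) ≤ 2^{−k}. Set n = ⌈ε · 2^k⌉ and assume n ≥ 1. Then there exist positive semidefinite matrices Λ_1, …, Λ_{n+1} on the space indexed by α × (Fin n → β) such that ∑_{j=1}^{n+1} Λ_j = 1 and, for every j ∈ {1,…,n}, Tr(Λ_j τ_j) ≥ 1 − 6ε, where τ_j((a,x),(a',x')) = ρ((a, x j),(a', x' j)) · ∏_{i ≠ j} σ(x i, x' i). -/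

import Mathlib

open Matrix Kronecker
open scoped ComplexOrder Classical

/-- A density matrix: a positive semidefinite matrix of trace 1. -/
def IsDensityMatrix {n : Type*} [Fintype n] (ρ : Matrix n n ℂ) : Prop :=
  ρ.PosSemidef ∧ ρ.trace = 1

/-- Partial trace over the first tensor factor. -/
noncomputable def ptraceFst {α β : Type*} [Fintype α] (ρ : Matrix (α × β) (α × β) ℂ) : Matrix β β ℂ :=
  Matrix.of fun b b' => ∑ a : α, ρ (a, b) (a, b')

/-- Partial trace over the second tensor factor. -/
noncomputable def ptraceSnd {α β : Type*} [Fintype β] (ρ : Matrix (α × β) (α × β) ℂ) : Matrix α α ℂ :=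
  Matrix.of fun a a' => ∑ b : β, ρ (a, b) (a', b)

/-- The positive semidefinite square root of a matrix (junk value `0` if the matrix is
not positive semidefinite). -/
noncomputable def psdSqrt {n : Type*} [Fintype n] [DecidableEq n] (A : Matrix n n ℂ) :
    Matrix n n ℂ :=
  if hA : A.PosSemidef then
    hA.1.eigenvectorUnitary.1 * diagonal ((↑) ∘ (√·) ∘ hA.1.eigenvalues) *
      (star hA.1.eigenvectorUnitary : Matrix n n ℂ) else 0

/-- Fidelity `F(ρ,σ) = Tr √(√ρ σ √ρ)`. -/
noncomputable def fidelity {n : Type*} [Fintype n] [DecidableEq n] (ρ σ : Matrix n n ℂ) : ℝ :=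
  ((psdSqrt (psdSqrt ρ * σ * psdSqrt ρ)).trace).re

/-- Purified distance `P(ρ,σ) = √(1 − F(ρ,σ)²)`. -/
noncomputable def purifiedDist {n : Type*} [Fintype n] [DecidableEq n]
    (ρ σ : Matrix n n ℂ) : ℝ :=
  Real.sqrt (1 - (fidelity ρ σ) ^ 2)

section SqrtCompat
open scoped MatrixOrder

noncomputable def Matrix.PosSemidef.sqrt {m : Type*} [Fintype m] [DecidableEq m]
    {A : Matrix m m ℂ} (hA : A.PosSemidef) : Matrix m m ℂ := CFC.sqrt A

lemma Matrix.PosSemidef.posSemidef_sqrt {m : Type*} [Fintype m] [DecidableEq m]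
    {A : Matrix m m ℂ} (hA : A.PosSemidef) : hA.sqrt.PosSemidef :=
  Matrix.nonneg_iff_posSemidef.mp (CFC.sqrt_nonneg A)

lemma Matrix.PosSemidef.sqrt_mul_self {m : Type*} [Fintype m] [DecidableEq m]
    {A : Matrix m m ℂ} (hA : A.PosSemidef) : hA.sqrt * hA.sqrt = A :=
  CFC.sqrt_mul_sqrt_self A (Matrix.nonneg_iff_posSemidef.mpr hA)

lemma Matrix.PosSemidef.eq_sqrt_of_sq_eq {m : Type*} [Fintype m] [DecidableEq m]
    {A B : Matrix m m ℂ} (hA : A.PosSemidef) (hB : B.PosSemidef) (h : A ^ 2 = B) :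
    A = hB.sqrt :=
  (CFC.sqrt_unique (by rw [← pow_two]; exact h) (Matrix.nonneg_iff_posSemidef.mpr hA)).symm

lemma Matrix.posSemidef_iff_eq_transpose_mul_self {m : Type*} [Fintype m] [DecidableEq m]
    {A : Matrix m m ℂ} : A.PosSemidef ↔ ∃ B : Matrix m m ℂ, A = Bᴴ * B := by
  constructor
  · intro hA
    exact ⟨hA.sqrt, by rw [hA.posSemidef_sqrt.1, hA.sqrt_mul_self]⟩
  · rintro ⟨B, rfl⟩
    exact Matrix.posSemidef_conjTranspose_mul_self B

end SqrtCompat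

set_option linter.unusedSectionVars false
set_option linter.unusedVariables false
set_option maxHeartbeats 1000000
section PBDlemmas
namespace PBD

section General
variable {m : Type*} [Fintype m] [DecidableEq m]

lemma trace_nonneg {A : Matrix m m ℂ} (hA : A.PosSemidef) : 0 ≤ A.trace := by
  rw [Matrix.trace]
  refine Finset.sum_nonneg fun i _ => ?_
  have := hA.dotProduct_mulVec_nonneg (Pi.single i 1)
  simpa [dotProduct, Matrix.mulVec_single, Pi.single_apply, Finset.sum_ite_eq',
    Matrix.diag] using this

lemma trace_mul_nonneg {A B : Matrix m m ℂ} (hA : A.PosSemidef) (hB : B.PosSemidef) :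
    0 ≤ ((A * B).trace) := by
  obtain ⟨C, rfl⟩ := (Matrix.posSemidef_iff_eq_transpose_mul_self).mp hA
  rw [Matrix.mul_assoc, Matrix.trace_mul_comm]
  exact trace_nonneg (hB.mul_mul_conjTranspose_same C)

lemma trace_mul_re_le {X Y B : Matrix m m ℂ} (hB : B.PosSemidef)
    (hXY : (Y - X).PosSemidef) : ((X * B).trace).re ≤ ((Y * B).trace).re := by
  have h := trace_mul_nonneg hXY hB
  rw [Matrix.sub_mul, Matrix.trace_sub] at h
  have := (Complex.le_def.mp h).1
  simp only [Complex.zero_re, Complex.sub_re] at this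
  linarith

/-- Operator monotonicity of the matrix square root. -/
lemma sqrt_mono {A B : Matrix m m ℂ} (hA : A.PosSemidef) (hB : B.PosSemidef)
    (hAB : (B - A).PosSemidef) : (hB.sqrt - hA.sqrt).PosSemidef := by
  set SA := hA.sqrt with hSA
  set SB := hB.sqrt with hSB
  have hSAp : SA.PosSemidef := hA.posSemidef_sqrt
  have hSBp : SB.PosSemidef := hB.posSemidef_sqrt
  have hC : (SB - SA).IsHermitian := hSBp.1.sub hSAp.1
  refine hC.posSemidef_iff_eigenvalues_nonneg.mpr fun i => show (0:ℝ) ≤ hC.eigenvalues i from ?_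
  set t : ℝ := hC.eigenvalues i with ht
  set v : m → ℂ := ⇑(hC.eigenvectorBasis i) with hv
  have hv0 : v ≠ 0 := by
    have h1 := hC.eigenvectorBasis.orthonormal.ne_zero i
    intro h
    exact h1 (by ext j; exact congrFun h j)
  have hCv : (SB - SA) *ᵥ v = (t : ℂ) • v := by
    have h2 := hC.mulVec_eigenvectorBasis i
    rw [← hv, ← ht] at h2
    rw [h2]; ext j; simp [Complex.real_smul]
  have hkey : star v ⬝ᵥ (B - A) *ᵥ v
      = (t : ℂ) * (star v ⬝ᵥ SB *ᵥ v + star v ⬝ᵥ SA *ᵥ v) := by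
    have hfact : B - A = SB * (SB - SA) + (SB - SA) * SA := by
      have h1 : SB * SB = B := hB.sqrt_mul_self
      have h2 : SA * SA = A := hA.sqrt_mul_self
      rw [← h1, ← h2]; noncomm_ring
    have e1 : star v ⬝ᵥ (SB * (SB - SA)) *ᵥ v = (t : ℂ) * (star v ⬝ᵥ SB *ᵥ v) := by
      rw [← Matrix.mulVec_mulVec, hCv, Matrix.mulVec_smul, dotProduct_smul,
        smul_eq_mul]
    have e2 : star v ⬝ᵥ ((SB - SA) * SA) *ᵥ v = (t : ℂ) * (star v ⬝ᵥ SA *ᵥ v) := by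
      rw [Matrix.dotProduct_mulVec, ← Matrix.vecMul_vecMul]
      have : star v ᵥ* (SB - SA) = (t : ℂ) • star v := by
        rw [← hC, ← Matrix.star_mulVec, hCv]
        ext j; simp [Complex.real_smul]
      rw [this, Matrix.smul_vecMul, smul_dotProduct, smul_eq_mul,
        ← Matrix.dotProduct_mulVec]
    rw [hfact, Matrix.add_mulVec, dotProduct_add, e1, e2, mul_add]
  have h0 : (0:ℂ) ≤ star v ⬝ᵥ (B - A) *ᵥ v := hAB.dotProduct_mulVec_nonneg v
  set qB := star v ⬝ᵥ SB *ᵥ v with hqB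
  set qA := star v ⬝ᵥ SA *ᵥ v with hqA
  have hqBn : (0:ℂ) ≤ qB := hSBp.dotProduct_mulVec_nonneg v
  have hqAn : (0:ℂ) ≤ qA := hSAp.dotProduct_mulVec_nonneg v
  by_cases hq : qB + qA = 0
  · obtain ⟨hB0, hA0⟩ := (add_eq_zero_iff_of_nonneg hqBn hqAn).mp hq
    have hBv : SB *ᵥ v = 0 := (hSBp.dotProduct_mulVec_zero_iff v).mp hB0
    have hAv : SA *ᵥ v = 0 := (hSAp.dotProduct_mulVec_zero_iff v).mp hA0
    have hz : (t : ℂ) • v = 0 := by rw [← hCv, Matrix.sub_mulVec, hBv, hAv, sub_zero]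
    rcases smul_eq_zero.mp hz with h | h
    · simp only [Complex.ofReal_eq_zero] at h
      exact h.ge
    · exact absurd h hv0
  · -- q ≠ 0
    have hq0 : (0:ℂ) ≤ qB + qA := add_nonneg hqBn hqAn
    have hqre : 0 < (qB + qA).re := by
      rcases lt_or_eq_of_le (Complex.le_def.mp hq0).1 with h | h
      · simpa using h
      · exfalso; apply hq
        have him : (qB + qA).im = 0 := ((Complex.le_def.mp hq0).2).symm
        exact Complex.ext (by simpa using h.symm) him
    have h1 : 0 ≤ ((t:ℂ) * (qB + qA)).re := by
      rw [← hkey]; exact (Complex.le_def.mp h0).1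
    have him : (qB + qA).im = 0 := ((Complex.le_def.mp hq0).2).symm
    rw [Complex.mul_re, Complex.ofReal_re, Complex.ofReal_im, him] at h1
    simp only [zero_mul, mul_zero, sub_zero] at h1
    by_contra hneg
    push_neg at hneg
    nlinarith
lemma sq_le_self {W : Matrix m m ℂ} (hW : W.PosSemidef) (hW1 : ((1:Matrix m m ℂ) - W).PosSemidef) :
    (W - W * W).PosSemidef := by
  obtain ⟨R, hRh, hRR⟩ : ∃ R : Matrix m m ℂ, Rᴴ = R ∧ R * R = W :=
    ⟨hW.sqrt, hW.posSemidef_sqrt.1, hW.sqrt_mul_self⟩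
  have key : W - W * W = R * (1 - W) * Rᴴ := by
    rw [hRh, ← hRR]; noncomm_ring
  rw [key]
  exact hW1.mul_mul_conjTranspose_same R

/-- `S ≤ 1` implies `S ≤ √S`. -/
lemma le_sqrt_self {S : Matrix m m ℂ} (hS0 : S.PosSemidef) (hS1 : ((1:Matrix m m ℂ) - S).PosSemidef) :
    (hS0.sqrt - S).PosSemidef := by
  have hone : (1 : Matrix m m ℂ) = (Matrix.PosSemidef.one (n := m) (R := ℂ)).sqrt :=
    Matrix.PosSemidef.eq_sqrt_of_sq_eq Matrix.PosSemidef.one Matrix.PosSemidef.one (by simp)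
  have hsq1 : ((1:Matrix m m ℂ) - hS0.sqrt).PosSemidef := by
    have h := sqrt_mono hS0 Matrix.PosSemidef.one hS1
    rwa [← hone] at h
  have h2 := sq_le_self hS0.posSemidef_sqrt hsq1
  rwa [hS0.sqrt_mul_self] at h2

/-- Hayashi–Nagaoka operator inequality. -/
lemma hayashi_nagaoka {S T Q : Matrix m m ℂ} (hS0 : S.PosSemidef) (hS1 : (1 - S).PosSemidef)
    (hT : T.PosSemidef) (hQpsd : Q.PosSemidef) (hQQ : Q * Q = S + T) (hdet : IsUnit Q.det) :
    (((1 - S) + (1 - S) + (T + T + T + T)) - (1 - Q⁻¹ * S * Q⁻¹)).PosSemidef := by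
  set N := Q⁻¹ with hNdef
  have hNQ : N * Q = 1 := Matrix.nonsing_inv_mul Q hdet
  have hQN : Q * N = 1 := Matrix.mul_nonsing_inv Q hdet
  have hNh : Nᴴ = N := by rw [hNdef, Matrix.conjTranspose_nonsing_inv, hQpsd.1]
  have hNT : N * T = Q - N * S := by
    have h : N * (S + T) = Q := by rw [← hQQ, ← Matrix.mul_assoc, hNQ, Matrix.one_mul]
    rw [Matrix.mul_add] at h
    rw [← h]; noncomm_ring
  have hTN : T * N = Q - S * N := by
    have h : (S + T) * N = Q := by rw [← hQQ, Matrix.mul_assoc, hQN, Matrix.mul_one]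
    rw [Matrix.add_mul] at h
    rw [← h]; noncomm_ring
  have hNTN : N * T * N = 1 - N * S * N := by
    rw [hNT, Matrix.sub_mul, hQN]
  -- S ≤ Q
  have hQS : (Q - S).PosSemidef := by
    have hST : (S + T).PosSemidef := hS0.add hT
    have hQeq : Q = hST.sqrt := hQpsd.eq_sqrt_of_sq_eq hST (by rw [pow_two, hQQ])
    have h1 : (hS0.sqrt - S).PosSemidef := le_sqrt_self hS0 hS1
    have h2 : (hST.sqrt - hS0.sqrt).PosSemidef := sqrt_mono hS0 hST (by simpa using hT)
    rw [hQeq]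
    have h3 := h2.add h1
    simpa using h3
  have expand : ((2:Matrix m m ℂ) - N) * T * (2 - N)
        + ((1 - N) * S * (1 - N) + (1 - N) * S * (1 - N))
        + ((Q - S) + (Q - S) + (Q - S) + (Q - S))
      = ((1 - S) + (1 - S) + (T + T + T + T)) - (1 - N * S * N) := by
    have hA : ((2:Matrix m m ℂ) - N) * T * (2 - N)
        + ((1 - N) * S * (1 - N) + (1 - N) * S * (1 - N))
        + ((Q - S) + (Q - S) + (Q - S) + (Q - S))
        = (T+T+T+T) - (N*T + N*T) - (T*N + T*N) + N*T*N + (S+S)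
          - (N*S + N*S) - (S*N + S*N) + (N*S*N + N*S*N)
          + (Q+Q+Q+Q) - (S+S+S+S) := by noncomm_ring
    rw [hA, hNTN, hNT, hTN]
    noncomm_ring
  rw [← expand]
  have t1 : (((2:Matrix m m ℂ) - N) * T * (2 - N)).PosSemidef := by
    have h := hT.mul_mul_conjTranspose_same ((2:Matrix m m ℂ) - N)
    rwa [show ((2:Matrix m m ℂ) - N)ᴴ = 2 - N by
      simp [Matrix.conjTranspose_sub, hNh]] at h
  have t2 : (((1:Matrix m m ℂ) - N) * S * (1 - N)).PosSemidef := by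
    have h := hS0.mul_mul_conjTranspose_same ((1:Matrix m m ℂ) - N)
    rwa [show ((1:Matrix m m ℂ) - N)ᴴ = 1 - N by simp [Matrix.conjTranspose_sub, hNh]] at h
  exact (t1.add (t2.add t2)).add (((hQS.add hQS).add hQS).add hQS)

end General

section Emb
variable {α β : Type*} [Fintype α] [DecidableEq α] [Fintype β] [DecidableEq β] {n : ℕ}

noncomputable def emb (j : Fin n) (M : Matrix (α × β) (α × β) ℂ) :
    Matrix (α × (Fin n → β)) (α × (Fin n → β)) ℂ :=
  Matrix.of fun p q => M (p.1, p.2 j) (q.1, q.2 j) *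
    ∏ i ∈ Finset.univ.erase j, (if p.2 i = q.2 i then (1:ℂ) else 0)

noncomputable def tens (j : Fin n) (ρ : Matrix (α × β) (α × β) ℂ) (σ : Matrix β β ℂ) :
    Matrix (α × (Fin n → β)) (α × (Fin n → β)) ℂ :=
  Matrix.of fun p q => ρ (p.1, p.2 j) (q.1, q.2 j) *
    ∏ i ∈ Finset.univ.erase j, σ (p.2 i) (q.2 i)

lemma split1 (h : Fin n → β → ℂ) :
    (∑ x : Fin n → β, ∏ i, h i (x i)) = ∏ i, ∑ b, h i b := by
  rw [Finset.prod_univ_sum, Fintype.piFinset_univ]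

lemma split1' (j : Fin n) (f : β → ℂ) (g : Fin n → β → ℂ) :
    (∑ x : Fin n → β, f (x j) * ∏ i ∈ Finset.univ.erase j, g i (x i))
      = (∑ b, f b) * ∏ i ∈ Finset.univ.erase j, ∑ b, g i b := by
  set H : Fin n → β → ℂ := fun i b => if i = j then f b else g i b with hH
  have e : ∀ x : Fin n → β, f (x j) * ∏ i ∈ Finset.univ.erase j, g i (x i)
      = ∏ i, H i (x i) := by
    intro x
    rw [← Finset.mul_prod_erase Finset.univ (fun i => H i (x i)) (Finset.mem_univ j)]
    congr 1
    · simp [hH]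
    · refine Finset.prod_congr rfl fun i hi => ?_
      simp [hH, (Finset.mem_erase.mp hi).1]
  rw [Finset.sum_congr rfl (fun x _ => e x), split1 H,
    ← Finset.mul_prod_erase Finset.univ (fun i => ∑ b, H i b) (Finset.mem_univ j)]
  congr 1
  · simp [hH]
  · refine Finset.prod_congr rfl fun i hi => ?_
    refine Finset.sum_congr rfl fun b _ => ?_
    simp [hH, (Finset.mem_erase.mp hi).1]

lemma split2' (j : Fin n) (f : β → β → ℂ) (g : Fin n → β → β → ℂ) :
    (∑ x : Fin n → β, ∑ y : Fin n → β,
        f (x j) (y j) * ∏ i ∈ Finset.univ.erase j, g i (x i) (y i))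
      = (∑ b, ∑ b', f b b') * ∏ i ∈ Finset.univ.erase j, ∑ b, ∑ b', g i b b' := by
  have e : ∀ x : Fin n → β, (∑ y : Fin n → β,
      f (x j) (y j) * ∏ i ∈ Finset.univ.erase j, g i (x i) (y i))
      = (∑ b', f (x j) b') * ∏ i ∈ Finset.univ.erase j, ∑ b', g i (x i) b' :=
    fun x => split1' j (fun b' => f (x j) b') (fun i b' => g i (x i) b')
  rw [Finset.sum_congr rfl (fun x _ => e x)]
  exact split1' j (fun b => (∑ b', f b b')) (fun i b => ∑ b', g i b b')

lemma split_cross (i₀ j : Fin n) (hij : j ≠ i₀) (f g : β → β → ℂ) (h : Fin n → β → β → ℂ) :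
    (∑ x : Fin n → β, ∑ y : Fin n → β, f (x i₀) (y i₀) * g (x j) (y j) *
        ∏ i ∈ (Finset.univ.erase i₀).erase j, h i (x i) (y i))
      = (∑ b, ∑ b', f b b') * ((∑ b, ∑ b', g b b') *
          ∏ i ∈ (Finset.univ.erase i₀).erase j, ∑ b, ∑ b', h i b b') := by
  have hj : j ∈ Finset.univ.erase i₀ := Finset.mem_erase.mpr ⟨hij, Finset.mem_univ j⟩
  set G : Fin n → β → β → ℂ := fun i b b' => if i = j then g b b' else h i b b' with hG
  have e : ∀ x y : Fin n → β, f (x i₀) (y i₀) * g (x j) (y j) *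
        ∏ i ∈ (Finset.univ.erase i₀).erase j, h i (x i) (y i)
      = f (x i₀) (y i₀) * ∏ i ∈ Finset.univ.erase i₀, G i (x i) (y i) := by
    intro x y
    rw [← Finset.mul_prod_erase (Finset.univ.erase i₀) (fun i => G i (x i) (y i)) hj,
      ← mul_assoc]
    congr 1
    · congr 1
      simp [hG]
    · refine Finset.prod_congr rfl fun i hi => ?_
      simp [hG, (Finset.mem_erase.mp hi).1]
  calc (∑ x : Fin n → β, ∑ y : Fin n → β, f (x i₀) (y i₀) * g (x j) (y j) *
        ∏ i ∈ (Finset.univ.erase i₀).erase j, h i (x i) (y i))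
      = ∑ x : Fin n → β, ∑ y : Fin n → β,
          f (x i₀) (y i₀) * ∏ i ∈ Finset.univ.erase i₀, G i (x i) (y i) := by
        refine Finset.sum_congr rfl fun x _ => Finset.sum_congr rfl fun y _ => e x y
    _ = (∑ b, ∑ b', f b b') * ∏ i ∈ Finset.univ.erase i₀, ∑ b, ∑ b', G i b b' :=
        split2' i₀ f G
    _ = (∑ b, ∑ b', f b b') * ((∑ b, ∑ b', g b b') *
          ∏ i ∈ (Finset.univ.erase i₀).erase j, ∑ b, ∑ b', h i b b') := by
        congr 1
        rw [← Finset.mul_prod_erase (Finset.univ.erase i₀)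
          (fun i => ∑ b, ∑ b', G i b b') hj]
        congr 1
        · simp [hG]
        · refine Finset.prod_congr rfl fun i hi => ?_
          refine Finset.sum_congr rfl fun b _ => Finset.sum_congr rfl fun b' _ => ?_
          simp [hG, (Finset.mem_erase.mp hi).1]

lemma delta_sum (c c' : β) :
    (∑ b, (if c = b then (1:ℂ) else 0) * (if b = c' then 1 else 0))
      = if c = c' then (1:ℂ) else 0 := by
  simp [ite_mul, Finset.sum_ite_eq]

lemma sigma_delta_sum (σ : Matrix β β ℂ) :
    (∑ b, ∑ b', (if b = b' then (1:ℂ) else 0) * σ b' b) = σ.trace := by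
  have e : ∀ b : β, (∑ b', (if b = b' then (1:ℂ) else 0) * σ b' b) = σ b b := by
    intro b
    rw [Finset.sum_eq_single b (fun b' _ hb' => by rw [if_neg (fun h => hb' h.symm), zero_mul])
      (fun h => absurd (Finset.mem_univ b) h)]
    rw [if_pos rfl, one_mul]
  rw [Finset.sum_congr rfl fun b _ => e b]
  rfl

lemma rho_delta_sum (ρ : Matrix (α × β) (α × β) ℂ) (a a' : α) :
    (∑ b, ∑ b', (if b = b' then (1:ℂ) else 0) * ρ (a', b') (a, b)) = ptraceSnd ρ a' a := by
  have e : ∀ b : β, (∑ b', (if b = b' then (1:ℂ) else 0) * ρ (a', b') (a, b)) = ρ (a', b) (a, b) := by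
    intro b
    rw [Finset.sum_eq_single b (fun b' _ hb' => by rw [if_neg (fun h => hb' h.symm), zero_mul])
      (fun h => absurd (Finset.mem_univ b) h)]
    rw [if_pos rfl, one_mul]
  rw [Finset.sum_congr rfl fun b _ => e b]
  rfl

lemma emb_one (j : Fin n) : emb (α := α) (β := β) j 1 = 1 := by
  ext p q
  simp only [emb, Matrix.of_apply, Matrix.one_apply]
  rcases p with ⟨a, x⟩; rcases q with ⟨a', x'⟩
  rw [Finset.prod_boole]
  by_cases h1 : a = a'
  · by_cases h2 : x = x'
    · subst h1; subst h2; simp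
    · have e0 : ¬ ((a, x) = (a', x')) := by simp [h2]
      rw [if_neg e0]
      by_cases h3 : x j = x' j
      · have e1 : ¬ ∀ i ∈ Finset.univ.erase j, x i = x' i := by
          intro hall
          apply h2; funext i
          by_cases hij : i = j
          · subst hij; exact h3
          · exact hall i (Finset.mem_erase.mpr ⟨hij, Finset.mem_univ i⟩)
        rw [if_neg e1, mul_zero]
      · have e2 : ¬ ((a, x j) = (a', x' j)) := by simp [h3]
        rw [if_neg e2, zero_mul]
  · have e1 : ¬ ((a, x) = (a', x')) := by simp [h1]
    have e2 : ¬ ((a, x j) = (a', x' j)) := by simp [h1]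
    rw [if_neg e1, if_neg e2, zero_mul]

lemma emb_conjTranspose (j : Fin n) (M : Matrix (α × β) (α × β) ℂ) :
    (emb j M)ᴴ = emb j Mᴴ := by
  ext p q
  simp only [emb, Matrix.conjTranspose_apply, Matrix.of_apply, star_mul']
  have hstar : star (∏ i ∈ Finset.univ.erase j, if q.2 i = p.2 i then (1:ℂ) else 0)
      = ∏ i ∈ Finset.univ.erase j, if p.2 i = q.2 i then (1:ℂ) else 0 := by
    rw [Finset.prod_boole, Finset.prod_boole]
    by_cases h : ∀ i ∈ Finset.univ.erase j, q.2 i = p.2 i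
    · rw [if_pos h, if_pos (fun i hi => (h i hi).symm)]; simp
    · rw [if_neg h, if_neg (fun hc => h fun i hi => (hc i hi).symm)]; simp
  rw [hstar, mul_comm]

lemma emb_mul (j : Fin n) (M M' : Matrix (α × β) (α × β) ℂ) :
    emb j M * emb j M' = emb j (M * M') := by
  ext p q
  rcases p with ⟨a, x⟩; rcases q with ⟨a', x'⟩
  simp only [emb, Matrix.mul_apply, Matrix.of_apply]
  rw [Fintype.sum_prod_type]
  have key : ∀ c : α, (∑ y : Fin n → β,
      M (a, x j) (c, y j) * (∏ i ∈ Finset.univ.erase j, if x i = y i then (1:ℂ) else 0) *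
      (M' (c, y j) (a', x' j) * ∏ i ∈ Finset.univ.erase j, if y i = x' i then (1:ℂ) else 0))
      = (∑ b, M (a, x j) (c, b) * M' (c, b) (a', x' j)) *
        ∏ i ∈ Finset.univ.erase j, (if x i = x' i then (1:ℂ) else 0) := by
    intro c
    have e1 : ∀ y : Fin n → β,
        M (a, x j) (c, y j) * (∏ i ∈ Finset.univ.erase j, if x i = y i then (1:ℂ) else 0) *
        (M' (c, y j) (a', x' j) * ∏ i ∈ Finset.univ.erase j, if y i = x' i then (1:ℂ) else 0)
        = (M (a, x j) (c, y j) * M' (c, y j) (a', x' j)) *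
          ∏ i ∈ Finset.univ.erase j,
            ((if x i = y i then (1:ℂ) else 0) * (if y i = x' i then (1:ℂ) else 0)) := by
      intro y
      rw [Finset.prod_mul_distrib]
      ring
    rw [Finset.sum_congr rfl (fun y _ => e1 y),
      split1' j (fun b => M (a, x j) (c, b) * M' (c, b) (a', x' j))
        (fun i b => (if x i = b then (1:ℂ) else 0) * (if b = x' i then 1 else 0))]
    congr 1
    exact Finset.prod_congr rfl fun i _ => delta_sum (x i) (x' i)
  rw [Finset.sum_congr rfl (fun c _ => key c), ← Finset.sum_mul]
  congr 1
  rw [Fintype.sum_prod_type]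

lemma emb_posSemidef (j : Fin n) {M : Matrix (α × β) (α × β) ℂ} (hM : M.PosSemidef) :
    (emb j M).PosSemidef := by
  obtain ⟨B, hB⟩ := Matrix.posSemidef_iff_eq_transpose_mul_self.mp hM
  have h : emb j M = (emb j B)ᴴ * emb j B := by
    rw [emb_conjTranspose, emb_mul, ← hB]
  rw [h]
  exact Matrix.posSemidef_conjTranspose_mul_self _

lemma emb_sub (j : Fin n) (M M' : Matrix (α × β) (α × β) ℂ) :
    emb j (M - M') = emb j M - emb j M' := by
  ext p q
  simp [emb, sub_mul]

lemma trace_emb_tens_same (j : Fin n) (M ρ : Matrix (α × β) (α × β) ℂ) (σ : Matrix β β ℂ) :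
    (emb j M * tens j ρ σ).trace
      = (M * ρ).trace * σ.trace ^ (Finset.univ.erase j).card := by
  rw [Matrix.trace]
  simp only [Matrix.diag, Matrix.mul_apply, emb, tens, Matrix.of_apply]
  rw [Fintype.sum_prod_type]
  have key : ∀ a : α, (∑ x : Fin n → β, ∑ q : α × (Fin n → β),
        M (a, x j) (q.1, q.2 j) * (∏ i ∈ Finset.univ.erase j, if x i = q.2 i then (1:ℂ) else 0) *
        (ρ (q.1, q.2 j) (a, x j) * ∏ i ∈ Finset.univ.erase j, σ (q.2 i) (x i)))
      = ∑ a' : α, (∑ b, ∑ b', M (a, b) (a', b') * ρ (a', b') (a, b)) *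
          σ.trace ^ (Finset.univ.erase j).card := by
    intro a
    have swap : (∑ x : Fin n → β, ∑ q : α × (Fin n → β),
        M (a, x j) (q.1, q.2 j) * (∏ i ∈ Finset.univ.erase j, if x i = q.2 i then (1:ℂ) else 0) *
        (ρ (q.1, q.2 j) (a, x j) * ∏ i ∈ Finset.univ.erase j, σ (q.2 i) (x i)))
        = ∑ a' : α, ∑ x : Fin n → β, ∑ x' : Fin n → β,
          M (a, x j) (a', x' j) * (∏ i ∈ Finset.univ.erase j, if x i = x' i then (1:ℂ) else 0) *
          (ρ (a', x' j) (a, x j) * ∏ i ∈ Finset.univ.erase j, σ (x' i) (x i)) := by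
      simp only [Fintype.sum_prod_type]
      exact Finset.sum_comm
    rw [swap]
    refine Finset.sum_congr rfl fun a' _ => ?_
    have mold : ∀ x x' : Fin n → β,
        M (a, x j) (a', x' j) * (∏ i ∈ Finset.univ.erase j, if x i = x' i then (1:ℂ) else 0) *
        (ρ (a', x' j) (a, x j) * ∏ i ∈ Finset.univ.erase j, σ (x' i) (x i))
        = (M (a, x j) (a', x' j) * ρ (a', x' j) (a, x j)) *
          ∏ i ∈ Finset.univ.erase j,
            ((if x i = x' i then (1:ℂ) else 0) * σ (x' i) (x i)) := by
      intro x x'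
      rw [Finset.prod_mul_distrib]
      ring
    rw [Finset.sum_congr rfl fun x _ => Finset.sum_congr rfl fun x' _ => mold x x',
      split2' j (fun b b' => M (a, b) (a', b') * ρ (a', b') (a, b))
        (fun i b b' => (if b = b' then (1:ℂ) else 0) * σ b' b)]
    congr 1
    rw [Finset.prod_congr rfl fun i _ => sigma_delta_sum σ, Finset.prod_const]
  rw [Finset.sum_congr rfl fun a _ => key a]
  have e : ∀ a : α, (∑ a' : α, (∑ b, ∑ b', M (a, b) (a', b') * ρ (a', b') (a, b)) *
        σ.trace ^ (Finset.univ.erase j).card)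
      = (∑ a' : α, ∑ b, ∑ b', M (a, b) (a', b') * ρ (a', b') (a, b)) *
        σ.trace ^ (Finset.univ.erase j).card := fun a => (Finset.sum_mul _ _ _).symm
  rw [Finset.sum_congr rfl fun a _ => e a, ← Finset.sum_mul]
  congr 1
  rw [Matrix.trace]
  simp only [Matrix.diag, Matrix.mul_apply]
  simp only [Fintype.sum_prod_type]
  refine Finset.sum_congr rfl fun a _ => ?_
  exact Finset.sum_comm

lemma erase_comm' (s : Finset (Fin n)) (a b : Fin n) : (s.erase a).erase b = (s.erase b).erase a := by
  ext x; simp only [Finset.mem_erase]; tauto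

lemma trace_emb_tens_ne (i₀ j : Fin n) (hne : j ≠ i₀) (M ρ : Matrix (α × β) (α × β) ℂ)
    (σ : Matrix β β ℂ) :
    (emb i₀ M * tens j ρ σ).trace
      = (M * (ptraceSnd ρ ⊗ₖ σ)).trace * σ.trace ^ ((Finset.univ.erase i₀).erase j).card := by
  have hj : j ∈ Finset.univ.erase i₀ := Finset.mem_erase.mpr ⟨hne, Finset.mem_univ j⟩
  have hi : i₀ ∈ Finset.univ.erase j :=
    Finset.mem_erase.mpr ⟨fun h => hne h.symm, Finset.mem_univ i₀⟩
  rw [Matrix.trace]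
  simp only [Matrix.diag, Matrix.mul_apply, emb, tens, Matrix.of_apply]
  rw [Fintype.sum_prod_type]
  have key : ∀ a : α, (∑ x : Fin n → β, ∑ q : α × (Fin n → β),
        M (a, x i₀) (q.1, q.2 i₀) *
          (∏ i ∈ Finset.univ.erase i₀, if x i = q.2 i then (1:ℂ) else 0) *
        (ρ (q.1, q.2 j) (a, x j) * ∏ i ∈ Finset.univ.erase j, σ (q.2 i) (x i)))
      = ∑ a' : α, (∑ b, ∑ b', M (a, b) (a', b') * σ b' b) *
          (ptraceSnd ρ a' a * σ.trace ^ ((Finset.univ.erase i₀).erase j).card) := by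
    intro a
    have swap : (∑ x : Fin n → β, ∑ q : α × (Fin n → β),
        M (a, x i₀) (q.1, q.2 i₀) *
          (∏ i ∈ Finset.univ.erase i₀, if x i = q.2 i then (1:ℂ) else 0) *
        (ρ (q.1, q.2 j) (a, x j) * ∏ i ∈ Finset.univ.erase j, σ (q.2 i) (x i)))
        = ∑ a' : α, ∑ x : Fin n → β, ∑ x' : Fin n → β,
          M (a, x i₀) (a', x' i₀) *
            (∏ i ∈ Finset.univ.erase i₀, if x i = x' i then (1:ℂ) else 0) *
          (ρ (a', x' j) (a, x j) * ∏ i ∈ Finset.univ.erase j, σ (x' i) (x i)) := by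
      simp only [Fintype.sum_prod_type]
      exact Finset.sum_comm
    rw [swap]
    refine Finset.sum_congr rfl fun a' _ => ?_
    have mold : ∀ x x' : Fin n → β,
        M (a, x i₀) (a', x' i₀) *
          (∏ i ∈ Finset.univ.erase i₀, if x i = x' i then (1:ℂ) else 0) *
        (ρ (a', x' j) (a, x j) * ∏ i ∈ Finset.univ.erase j, σ (x' i) (x i))
        = (M (a, x i₀) (a', x' i₀) * σ (x' i₀) (x i₀)) *
          ((if x j = x' j then (1:ℂ) else 0) * ρ (a', x' j) (a, x j)) *
          ∏ i ∈ (Finset.univ.erase i₀).erase j,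
            ((if x i = x' i then (1:ℂ) else 0) * σ (x' i) (x i)) := by
      intro x x'
      rw [← Finset.mul_prod_erase (Finset.univ.erase i₀)
          (fun i => if x i = x' i then (1:ℂ) else 0) hj,
        ← Finset.mul_prod_erase (Finset.univ.erase j) (fun i => σ (x' i) (x i)) hi,
        erase_comm' Finset.univ j i₀, Finset.prod_mul_distrib]
      ring
    rw [Finset.sum_congr rfl fun x _ => Finset.sum_congr rfl fun x' _ => mold x x',
      split_cross i₀ j hne (fun b b' => M (a, b) (a', b') * σ b' b)
        (fun b b' => (if b = b' then (1:ℂ) else 0) * ρ (a', b') (a, b))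
        (fun i b b' => (if b = b' then (1:ℂ) else 0) * σ b' b)]
    congr 2
    · exact rho_delta_sum ρ a a'
    · rw [Finset.prod_congr rfl fun i _ => sigma_delta_sum σ, Finset.prod_const]
  rw [Finset.sum_congr rfl fun a _ => key a]
  conv_rhs => rw [Matrix.trace]
  simp only [Matrix.diag, Matrix.mul_apply, Matrix.kroneckerMap_apply, Fintype.sum_prod_type,
    Finset.sum_mul, Finset.mul_sum]
  refine Finset.sum_congr rfl fun a _ => ?_
  rw [Finset.sum_comm]
  refine Finset.sum_congr rfl fun b _ => Finset.sum_congr rfl fun a' _ =>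
    Finset.sum_congr rfl fun b' _ => ?_
  ring

lemma trace_tens (j : Fin n) (ρ : Matrix (α × β) (α × β) ℂ) (σ : Matrix β β ℂ) :
    (tens j ρ σ).trace = ρ.trace * σ.trace ^ (Finset.univ.erase j).card := by
  have h := trace_emb_tens_same j 1 ρ σ
  rwa [emb_one, Matrix.one_mul, Matrix.one_mul] at h

lemma posSemidef_smul {c : ℝ} (hc : 0 ≤ c) {m : Type*} [Fintype m] {X : Matrix m m ℂ}
    (hX : X.PosSemidef) : ((c:ℂ) • X).PosSemidef := by
  refine Matrix.PosSemidef.of_dotProduct_mulVec_nonneg ?_ fun v => ?_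
  · unfold Matrix.IsHermitian
    rw [Matrix.conjTranspose_smul, hX.1]
    congr 1
    simp [Complex.ext_iff]
  · rw [Matrix.smul_mulVec, dotProduct_smul]
    have h := hX.dotProduct_mulVec_nonneg v
    rw [smul_eq_mul]
    have hcc : (0:ℂ) ≤ (c:ℂ) := by
      rw [Complex.le_def]; simp [hc]
    exact mul_nonneg hcc h

lemma tens_posSemidef (j : Fin n) {ρ : Matrix (α × β) (α × β) ℂ} {σ : Matrix β β ℂ}
    (hρ : ρ.PosSemidef) (hσ : σ.PosSemidef) : (tens j ρ σ).PosSemidef := by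
  by_cases hβ : Nonempty β
  case neg =>
    have hE : IsEmpty (α × (Fin n → β)) := ⟨fun p => hβ ⟨p.2 j⟩⟩
    refine Matrix.PosSemidef.of_dotProduct_mulVec_nonneg ?_ fun v => ?_
    · ext p q; exact hE.elim p
    · rw [dotProduct]
      rw [Finset.univ_eq_empty, Finset.sum_empty]
  case pos =>
    obtain ⟨R, hR⟩ := Matrix.posSemidef_iff_eq_transpose_mul_self.mp hρ
    obtain ⟨S, hS⟩ := Matrix.posSemidef_iff_eq_transpose_mul_self.mp hσ
    set C : Matrix ((α × β) × (Fin n → β)) (α × (Fin n → β)) ℂ :=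
      Matrix.of fun r p => R r.1 (p.1, p.2 j) * ∏ i ∈ Finset.univ.erase j, S (r.2 i) (p.2 i)
      with hC
    have key : Cᴴ * C = ((Fintype.card β : ℝ) : ℂ) • tens j ρ σ := by
      ext p q
      rcases p with ⟨a, x⟩; rcases q with ⟨a', x'⟩
      simp only [Matrix.mul_apply, Matrix.conjTranspose_apply, hC, Matrix.of_apply,
        Matrix.smul_apply, tens]
      rw [Fintype.sum_prod_type]
      have inner : ∀ w : α × β, (∑ y : Fin n → β,
          star (R w (a, x j) * ∏ i ∈ Finset.univ.erase j, S (y i) (x i)) *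
          (R w (a', x' j) * ∏ i ∈ Finset.univ.erase j, S (y i) (x' i)))
          = (Fintype.card β : ℂ) * ((star (R w (a, x j)) * R w (a', x' j)) *
              ∏ i ∈ Finset.univ.erase j, σ (x i) (x' i)) := by
        intro w
        have mold : ∀ y : Fin n → β,
            star (R w (a, x j) * ∏ i ∈ Finset.univ.erase j, S (y i) (x i)) *
            (R w (a', x' j) * ∏ i ∈ Finset.univ.erase j, S (y i) (x' i))
            = (star (R w (a, x j)) * R w (a', x' j)) *
              ∏ i ∈ Finset.univ.erase j, (star (S (y i) (x i)) * S (y i) (x' i)) := by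
          intro y
          rw [star_mul', star_prod, Finset.prod_mul_distrib]
          ring
        rw [Finset.sum_congr rfl fun y _ => mold y]
        have e2 : ∀ y : Fin n → β, (star (R w (a, x j)) * R w (a', x' j)) *
            ∏ i ∈ Finset.univ.erase j, (star (S (y i) (x i)) * S (y i) (x' i))
            = (star (R w (a, x j)) * R w (a', x' j)) * (1 : ℂ) *
              ∏ i ∈ Finset.univ.erase j, (star (S (y i) (x i)) * S (y i) (x' i)) := by
          intro y; ring
        rw [Finset.sum_congr rfl fun y _ => e2 y]
        have e3 := split1' j (fun _ : β => (star (R w (a, x j)) * R w (a', x' j)) * (1:ℂ))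
          (fun i b => star (S b (x i)) * S b (x' i))
        rw [show (∑ y : Fin n → β, (star (R w (a, x j)) * R w (a', x' j)) * (1 : ℂ) *
              ∏ i ∈ Finset.univ.erase j, (star (S (y i) (x i)) * S (y i) (x' i)))
            = ∑ y : Fin n → β, ((fun _ : β => (star (R w (a, x j)) * R w (a', x' j)) * (1:ℂ)) (y j)) *
              ∏ i ∈ Finset.univ.erase j, (fun i b => star (S b (x i)) * S b (x' i)) i (y i)
          from rfl, e3]
        have e4 : ∀ i ∈ Finset.univ.erase j, (∑ b, star (S b (x i)) * S b (x' i)) = σ (x i) (x' i) := by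
          intro i _
          rw [hS]
          simp [Matrix.mul_apply, Matrix.conjTranspose_apply]
        rw [Finset.prod_congr rfl e4]
        simp [Finset.sum_const, mul_comm, mul_assoc, mul_left_comm]
      rw [Finset.sum_congr rfl fun w _ => inner w, ← Finset.mul_sum, ← Finset.sum_mul]
      have e5 : (∑ w : α × β, star (R w (a, x j)) * R w (a', x' j)) = ρ (a, x j) (a', x' j) := by
        rw [hR]
        simp [Matrix.mul_apply, Matrix.conjTranspose_apply]
      rw [e5]
      simp [Complex.real_smul]
    have hcard : (0:ℝ) ≤ ((Fintype.card β : ℝ))⁻¹ := by positivity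
    -- note
    set r : ℝ := ((Fintype.card β : ℝ))⁻¹ with hr
    have h2 : tens j ρ σ = (r : ℂ) • (Cᴴ * C) := by
      rw [key, smul_smul]
      have hrc : (r : ℂ) * ((Fintype.card β : ℝ) : ℂ) = 1 := by
        rw [← Complex.ofReal_mul, hr, inv_mul_cancel₀ (by simp [Fintype.card_ne_zero] : (Fintype.card β : ℝ) ≠ 0), Complex.ofReal_one]
      rw [hrc, one_smul]
    rw [h2]
    exact posSemidef_smul hcard (Matrix.posSemidef_conjTranspose_mul_self C)


lemma posSemidef_sum {m ι : Type*} [Fintype m] (s : Finset ι) (f : ι → Matrix m m ℂ)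
    (h : ∀ i ∈ s, (f i).PosSemidef) : (∑ i ∈ s, f i).PosSemidef :=
  Finset.sum_induction f _ (fun _ _ ha hb => ha.add hb) Matrix.PosSemidef.zero h

end Emb
end PBD
end PBDlemmas

open PBD in
/-- Position-based decoding. -/
theorem position_based_decoding {α β : Type*} [Fintype α] [DecidableEq α]
    [Fintype β] [DecidableEq β]
    (ε : ℝ) (hε0 : 0 < ε) (hε1 : ε < 1)
    (ρ : Matrix (α × β) (α × β) ℂ) (σ : Matrix β β ℂ)
    (hρ : IsDensityMatrix ρ) (hσ : IsDensityMatrix σ)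
    (hsupp : ∀ v : β → ℂ, σ.mulVec v = 0 → (ptraceFst ρ).mulVec v = 0)
    (T : Matrix (α × β) (α × β) ℂ) (hT0 : T.PosSemidef) (hT1 : (1 - T).PosSemidef)
    (hTρ : 1 - ε ≤ ((T * ρ).trace).re)
    (k : ℝ) (hk : ((T * (ptraceSnd ρ ⊗ₖ σ)).trace).re ≤ (2:ℝ) ^ (-k))
    (n : ℕ) (hn : n = ⌈ε * (2:ℝ) ^ k⌉₊) (hn1 : 1 ≤ n) :
    ∃ Λ : Fin (n + 1) → Matrix (α × (Fin n → β)) (α × (Fin n → β)) ℂ,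
      (∀ j, (Λ j).PosSemidef) ∧ (∑ j, Λ j = 1) ∧
      ∀ j : Fin n, 1 - 6 * ε ≤
        ((Λ j.castSucc * Matrix.of (fun p q : α × (Fin n → β) =>
            ρ (p.1, p.2 j) (q.1, q.2 j) *
              ∏ i ∈ Finset.univ.erase j, σ (p.2 i) (q.2 i))).trace).re := by
  classical
  obtain ⟨hρpsd, hρtr⟩ : ρ.PosSemidef ∧ ρ.trace = 1 := hρ
  obtain ⟨hσpsd, hσtr⟩ : σ.PosSemidef ∧ σ.trace = 1 := hσ
  -- the slack δ
  have h2k : (0:ℝ) < (2:ℝ) ^ k := Real.rpow_pos_of_pos (by norm_num) k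
  have h2knk : (2:ℝ) ^ k * (2:ℝ) ^ (-k) = 1 := by
    rw [← Real.rpow_add (by norm_num)]
    simp
  have hnlt : ((n:ℝ) - 1) < ε * (2:ℝ) ^ k := by
    have h1 : (n - 1 : ℕ) < ⌈ε * (2:ℝ) ^ k⌉₊ := by omega
    have h2 := Nat.lt_ceil.mp h1
    have h3 : ((n - 1 : ℕ) : ℝ) = (n:ℝ) - 1 := by
      have : (1:ℕ) ≤ n := hn1
      push_cast [Nat.cast_sub this]
      ring
    linarith [h3 ▸ h2]
  set δ : ℝ := ε - ((n:ℝ) - 1) * (2:ℝ) ^ (-k) with hδdef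
  have hδpos : 0 < δ := by
    rw [hδdef]
    have h2kn : (0:ℝ) < (2:ℝ) ^ (-k) := Real.rpow_pos_of_pos (by norm_num) _
    have := mul_lt_mul_of_pos_right hnlt h2kn
    rw [mul_assoc, h2knk, mul_one] at this
    linarith
  -- the operators
  set Op : Fin n → Matrix (α × (Fin n → β)) (α × (Fin n → β)) ℂ := fun i => PBD.emb i T
    with hOpdef
  have hOppsd : ∀ i, (Op i).PosSemidef := fun i => PBD.emb_posSemidef i hT0
  have hOp1 : ∀ i, ((1:Matrix (α × (Fin n → β)) (α × (Fin n → β)) ℂ) - Op i).PosSemidef := by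
    intro i
    have h := PBD.emb_posSemidef i hT1
    rwa [PBD.emb_sub, PBD.emb_one] at h
  set G : Matrix (α × (Fin n → β)) (α × (Fin n → β)) ℂ := (∑ i, Op i) + (δ:ℂ) • 1 with hGdef
  have hsumpsd : (∑ i, Op i).PosSemidef := PBD.posSemidef_sum _ _ (fun i _ => hOppsd i)
  have hGpd : G.PosDef := by
    refine Matrix.PosDef.of_dotProduct_mulVec_pos (hsumpsd.1.add ?_) fun v hv => ?_
    · exact (PBD.posSemidef_smul hδpos.le Matrix.PosSemidef.one).1
    · rw [hGdef, Matrix.add_mulVec, dotProduct_add]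
      have h1 : (0:ℂ) ≤ star v ⬝ᵥ (∑ i, Op i) *ᵥ v := hsumpsd.dotProduct_mulVec_nonneg v
      have h2 : (0:ℂ) < star v ⬝ᵥ ((δ:ℂ) • 1) *ᵥ v := by
        rw [Matrix.smul_mulVec, dotProduct_smul, Matrix.one_mulVec]
        have hp : (0:ℂ) < star v ⬝ᵥ v := Matrix.dotProduct_star_self_pos_iff.mpr hv
        have : (0:ℂ) < (δ:ℂ) := by
          rw [Complex.lt_def]; simp [hδpos]
        calc (0:ℂ) = (δ:ℂ) * 0 := by ring
          _ < (δ:ℂ) * (star v ⬝ᵥ v) := by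
              exact mul_lt_mul_of_pos_left hp this
        -- smul_eq_mul
      calc (0:ℂ) < star v ⬝ᵥ ((δ:ℂ) • 1) *ᵥ v := h2
        _ ≤ star v ⬝ᵥ (∑ i, Op i) *ᵥ v + star v ⬝ᵥ ((δ:ℂ) • 1) *ᵥ v := le_add_of_nonneg_left h1
  set Q : Matrix (α × (Fin n → β)) (α × (Fin n → β)) ℂ := hGpd.posSemidef.sqrt with hQdef
  have hQpsd : Q.PosSemidef := hGpd.posSemidef.posSemidef_sqrt
  have hQQ : Q * Q = G := hGpd.posSemidef.sqrt_mul_self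
  have hdet : IsUnit Q.det := by
    have h1 : Q.det * Q.det = G.det := by rw [← Matrix.det_mul, hQQ]
    have h2 : G.det ≠ 0 := by
      have := hGpd.det_pos
      intro h; rw [h] at this; exact lt_irrefl 0 this
    refine isUnit_iff_ne_zero.mpr fun h => h2 ?_
    rw [← h1, h, mul_zero]
  set N : Matrix (α × (Fin n → β)) (α × (Fin n → β)) ℂ := Q⁻¹ with hNdef
  have hNQ : N * Q = 1 := Matrix.nonsing_inv_mul Q hdet
  have hQN : Q * N = 1 := Matrix.mul_nonsing_inv Q hdet
  have hNh : Nᴴ = N := by rw [hNdef, Matrix.conjTranspose_nonsing_inv, hQpsd.1]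
  -- the POVM
  refine ⟨fun l => Fin.lastCases ((δ:ℂ) • (N * N)) (fun j => N * Op j * N) l, ?_, ?_, ?_⟩
  · -- PSD
    intro l
    refine Fin.lastCases ?_ (fun j => ?_) l
    · simp only [Fin.lastCases_last]
      have h := PBD.posSemidef_smul hδpos.le (Matrix.PosSemidef.one.mul_mul_conjTranspose_same N)
      rwa [Matrix.mul_one, hNh] at h
    · simp only [Fin.lastCases_castSucc]
      have h := (hOppsd j).mul_mul_conjTranspose_same N
      rwa [hNh] at h
  · -- sums to 1
    rw [Fin.sum_univ_castSucc]
    simp only [Fin.lastCases_castSucc, Fin.lastCases_last]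
    have h1 : (∑ j : Fin n, N * Op j * N) = N * (∑ j, Op j) * N := by
      rw [Finset.mul_sum, Finset.sum_mul]
    rw [h1]
    have h2 : N * (∑ j, Op j) * N + (δ:ℂ) • (N * N) = N * G * N := by
      rw [hGdef, Matrix.mul_add, Matrix.add_mul]
      congr 1
      rw [Matrix.mul_smul, Matrix.mul_one, Matrix.smul_mul]
    rw [h2, ← hQQ, show N * (Q * Q) * N = (N * Q) * (Q * N) by noncomm_ring, hNQ, hQN, mul_one]
  · -- the success probability bound
    intro j
    simp only [Fin.lastCases_castSucc]
    have hτ : (Matrix.of (fun p q : α × (Fin n → β) =>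
        ρ (p.1, p.2 j) (q.1, q.2 j) *
          ∏ i ∈ Finset.univ.erase j, σ (p.2 i) (q.2 i))) = PBD.tens j ρ σ := rfl
    rw [hτ]
    set τ : Matrix (α × (Fin n → β)) (α × (Fin n → β)) ℂ := PBD.tens j ρ σ with hτdef
    have hτpsd : τ.PosSemidef := PBD.tens_posSemidef j hρpsd hσpsd
    have hτtr : τ.trace = 1 := by
      rw [hτdef, PBD.trace_tens, hρtr, hσtr, one_pow, mul_one]
    -- Hayashi–Nagaoka applied with S = Op j, T' = G - Op j
    set T' : Matrix (α × (Fin n → β)) (α × (Fin n → β)) ℂ := (∑ i ∈ Finset.univ.erase j, Op i) + (δ:ℂ) • 1 with hT'def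
    have hT'G : Op j + T' = G := by
      rw [hT'def, hGdef, ← add_assoc]
      congr 1
      exact Finset.add_sum_erase _ _ (Finset.mem_univ j)
    have hT'psd : T'.PosSemidef :=
      (PBD.posSemidef_sum _ _ (fun i _ => hOppsd i)).add (PBD.posSemidef_smul hδpos.le Matrix.PosSemidef.one)
    have hHN := PBD.hayashi_nagaoka (hOppsd j) (hOp1 j) hT'psd hQpsd (by rw [hQQ, hT'G]) hdet
    have hle := PBD.trace_mul_re_le hτpsd hHN
    -- compute left trace
    have hL : (((1 - N * Op j * N) * τ).trace) = 1 - ((N * Op j * N * τ).trace) := by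
      rw [Matrix.sub_mul, Matrix.one_mul, Matrix.trace_sub, hτtr]
    -- compute traces of pieces
    have htrOp : ((Op j * τ).trace) = (T * ρ).trace := by
      rw [hτdef, hOpdef]
      rw [PBD.trace_emb_tens_same, hσtr, one_pow, mul_one]
    have htrCross : ∀ i ∈ Finset.univ.erase j, ((Op i * τ).trace) = (T * (ptraceSnd ρ ⊗ₖ σ)).trace := by
      intro i hi
      rw [hτdef, hOpdef]
      rw [PBD.trace_emb_tens_ne i j (fun h => (Finset.mem_erase.mp hi).1 h.symm), hσtr, one_pow,
        mul_one]
    have htrT' : ((T' * τ).trace) = (Finset.univ.erase j).card • (T * (ptraceSnd ρ ⊗ₖ σ)).trace + (δ:ℂ) := by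
      rw [hT'def, Matrix.add_mul, Matrix.trace_add, Finset.sum_mul, Matrix.trace_sum,
        Finset.sum_congr rfl htrCross, Finset.sum_const, Matrix.smul_mul, Matrix.one_mul,
        Matrix.trace_smul, hτtr, smul_eq_mul, mul_one]
    -- the right-hand side trace
    have hR : ((((1 - Op j) + (1 - Op j) + (T' + T' + T' + T')) * τ).trace)
        = (1 - (T * ρ).trace) + (1 - (T * ρ).trace) +
          (((Finset.univ.erase j).card • (T * (ptraceSnd ρ ⊗ₖ σ)).trace + (δ:ℂ)) +
           ((Finset.univ.erase j).card • (T * (ptraceSnd ρ ⊗ₖ σ)).trace + (δ:ℂ)) +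
           ((Finset.univ.erase j).card • (T * (ptraceSnd ρ ⊗ₖ σ)).trace + (δ:ℂ)) +
           ((Finset.univ.erase j).card • (T * (ptraceSnd ρ ⊗ₖ σ)).trace + (δ:ℂ))) := by
      rw [Matrix.add_mul, Matrix.add_mul, Matrix.add_mul, Matrix.add_mul, Matrix.add_mul,
        Matrix.sub_mul, Matrix.one_mul]
      rw [Matrix.trace_add, Matrix.trace_add, Matrix.trace_add, Matrix.trace_add,
        Matrix.trace_add, Matrix.trace_sub]
      rw [htrOp, htrT', hτtr]
    -- cardinality
    have hcard : (Finset.univ.erase j).card = n - 1 := by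
      rw [Finset.card_erase_of_mem (Finset.mem_univ j), Finset.card_univ, Fintype.card_fin]
    -- real parts
    have hcastn : ((n - 1 : ℕ) : ℝ) = (n:ℝ) - 1 := by
      have h1 : (1:ℕ) ≤ n := hn1
      push_cast [Nat.cast_sub h1]
      ring
    rw [hL, hR] at hle
    set z1 : ℂ := (T * ρ).trace with hz1
    set z2 : ℂ := (T * (ptraceSnd ρ ⊗ₖ σ)).trace with hz2
    set X : ℂ := (N * Op j * N * τ).trace with hX
    simp only [Complex.sub_re, Complex.add_re, Complex.one_re, nsmul_eq_mul, Complex.mul_re,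
      Complex.natCast_re, Complex.natCast_im, Complex.ofReal_re, Complex.ofReal_im,
      zero_mul, mul_zero, sub_zero] at hle
    have hz2b : ((Finset.univ.erase j).card : ℝ) * z2.re ≤ ((n:ℝ) - 1) * (2:ℝ) ^ (-k) := by
      rw [hcard, hcastn]
      have hnn : (0:ℝ) ≤ (n:ℝ) - 1 := by
        have h1 : (1:ℕ) ≤ n := hn1
        have : (1:ℝ) ≤ (n:ℝ) := by exact_mod_cast h1
        linarith
      exact mul_le_mul_of_nonneg_left hk hnn
    have hεb : 1 - z1.re ≤ ε := by linarith [hTρ]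
    have hδe : ((n:ℝ) - 1) * (2:ℝ) ^ (-k) + δ = ε := by rw [hδdef]; ring
    linarith
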